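/- TRDM is efficient and budget balanced. Under truthful bidding: (i) the item is allocated to the agent with the highest valuation, so the social welfare equals max_{i∈V} v_i; (ii) the payments telescope along the path from s to w, namely p_w + Σ_{j=1}^{k−1} p_{a_j} = b*_{V_{-r_s^*}}, so the sum of all agents' payments equals the seller's revenue Rev = b*_{V_{-r_s^*}}, which is nonnegative. -/

import Mathlib

open Classical

/-- A finite directed tree rooted at the seller `s`: every vertex reaches `s`
by iterating the parent map, and the root is its own parent. The agents are
the non-root vertices. -/
structure DiffusionTree (α : Type*) where
  s : α
  parent : α → α
  parent_s : parent s = s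
  reaches_s : ∀ x : α, ∃ n : ℕ, parent^[n] x = s

namespace DiffusionTree

variable {α : Type*} [Fintype α]

/-- The set of agents: all vertices except the seller. -/
noncomputable def agents (T : DiffusionTree α) : Finset α :=
  Finset.univ.filter (fun x => x ≠ T.s)

/-- `T.desc i j` : `j` is a strict descendant of `i`. -/
def desc (T : DiffusionTree α) (i j : α) : Prop :=
  ∃ n : ℕ, 0 < n ∧ T.parent^[n] j = i

/-- `V_{-i}` relative to the active agent set `A`: remove `i` and its descendants. -/
noncomputable def Vminus (T : DiffusionTree α) (A : Finset α) (i : α) : Finset α :=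
  A.filter (fun j => j ≠ i ∧ ¬ T.desc i j)

/-- `b*_S`: the highest bid in `S`, with `b*_∅ = 0`. -/
noncomputable def bstar (b : α → ℝ) (S : Finset α) : ℝ :=
  WithBot.unbotD 0 ((S.image b).max)

/-- Distance from a vertex to the root. -/
noncomputable def depth (T : DiffusionTree α) (x : α) : ℕ :=
  Nat.find (T.reaches_s x)

/-- The vertex `a_j` on the path `s = a_0, a_1, …, a_k = w` from `s` to `w`. -/
noncomputable def pathVx (T : DiffusionTree α) (w : α) (j : ℕ) : α :=
  T.parent^[T.depth w - j] w

/-- TRDM payments, on the active agent set `A`, for bids `b` and winner `w`: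
the winner pays `b*_{V_{-w}}`; an intermediate path agent `a_j` pays
`b*_{V_{-a_j}} − b*_{V_{-a_{j+1}}}`; everyone else pays `0`. -/
noncomputable def payment (T : DiffusionTree α) (A : Finset α) (b : α → ℝ)
    (w : α) (x : α) : ℝ :=
  if x = w then bstar b (T.Vminus A w)
  else if ∃ j : ℕ, 1 ≤ j ∧ j < T.depth w ∧ T.pathVx w j = x then
    bstar b (T.Vminus A x) - bstar b (T.Vminus A (T.pathVx w (T.depth x + 1)))
  else 0

/-- TRDM utility of an agent `i` with true valuation `v`. -/
noncomputable def util (T : DiffusionTree α) (A : Finset α) (b : α → ℝ)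
    (w : α) (v : ℝ) (i : α) : ℝ :=
  (if i = w then v else 0) - T.payment A b w i

lemma iter_depth (T : DiffusionTree α) (x : α) :
    T.parent^[T.depth x] x = T.s := Nat.find_spec (T.reaches_s x)

lemma depth_le (T : DiffusionTree α) {x : α} {n : ℕ} (h : T.parent^[n] x = T.s) :
    T.depth x ≤ n := Nat.find_min' _ h

lemma depth_s (T : DiffusionTree α) : T.depth T.s = 0 :=
  Nat.le_zero.mp (T.depth_le (by simp))

lemma depth_pathVx (T : DiffusionTree α) (w : α) {j : ℕ} (hj : j ≤ T.depth w) :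
    T.depth (T.pathVx w j) = j := by
  have h1 : T.parent^[j] (T.pathVx w j) = T.s := by
    rw [pathVx, ← Function.iterate_add_apply]
    have : j + (T.depth w - j) = T.depth w := by omega
    rw [this]; exact T.iter_depth w
  have h2 : T.depth (T.pathVx w j) ≤ j := T.depth_le h1
  rcases eq_or_lt_of_le h2 with h | h
  · exact h
  · exfalso
    have h3 : T.parent^[T.depth (T.pathVx w j) + (T.depth w - j)] w = T.s := by
      rw [Function.iterate_add_apply]
      exact T.iter_depth _
    have := T.depth_le h3
    omega

lemma pathVx_depth (T : DiffusionTree α) (w : α) : T.pathVx w (T.depth w) = w := by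
  simp [pathVx]

lemma depth_pos_of_agent (T : DiffusionTree α) {w : α} (hw : w ∈ T.agents) :
    1 ≤ T.depth w := by
  rcases Nat.eq_zero_or_pos (T.depth w) with h | h
  · exfalso
    have := T.iter_depth w
    rw [h] at this
    simp only [Function.iterate_zero, id] at this
    simp [agents, this] at hw
  · exact h

lemma bstar_nonneg {v : α → ℝ} (S : Finset α) (h : ∀ i ∈ S, 0 ≤ v i) :
    0 ≤ bstar v S := by
  unfold bstar
  cases hm : (S.image v).max with
  | bot => simp
  | coe a =>
    have := Finset.mem_of_max hm
    rcases Finset.mem_image.mp this with ⟨j, hj, rfl⟩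
    simpa using h j hj

end DiffusionTree

open DiffusionTree in
/-- TRDM is efficient and budget balanced. Under truthful bidding:
(i) the item is allocated to the agent with the highest valuation, so the social
welfare equals `max_{i∈V} v_i`; (ii) the payments telescope along the path from `s`
to `w`: `p_w + Σ_{j=1}^{k−1} p_{a_j} = b*_{V_{-r_s^*}}`, so the sum of all agents'
payments equals the seller's revenue `Rev = b*_{V_{-r_s^*}}`, which is nonnegative. -/
theorem trdm_efficient_budget_balanced
    {α : Type*} [Fintype α] (T : DiffusionTree α)
    (v : α → ℝ) (hpos : ∀ i ∈ T.agents, 0 ≤ v i)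
    (hdist : ∀ i ∈ T.agents, ∀ j ∈ T.agents, i ≠ j → v i ≠ v j)
    (w : α) (hw : w ∈ T.agents)
    (hmax : ∀ j ∈ T.agents, j ≠ w → v j < v w) :
    -- (i) efficiency: the winner's valuation is the maximum valuation
    v w = bstar v T.agents ∧
    -- (ii) telescoping of the payments along the path from `s` to `w`
    (T.payment T.agents v w w
        + ∑ j ∈ Finset.Ico 1 (T.depth w), T.payment T.agents v w (T.pathVx w j)
      = bstar v (T.Vminus T.agents (T.pathVx w 1))) ∧
    -- the total payment equals the seller's revenue `b*_{V_{-r_s^*}}` …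
    (∑ x ∈ T.agents, T.payment T.agents v w x
      = bstar v (T.Vminus T.agents (T.pathVx w 1))) ∧
    -- … which is nonnegative (budget balance)
    0 ≤ bstar v (T.Vminus T.agents (T.pathVx w 1)) := by
  have hd : 1 ≤ T.depth w := T.depth_pos_of_agent hw
  set d := T.depth w with hd_def
  -- (i)
  have part1 : v w = bstar v T.agents := by
    unfold bstar
    have hmx : (T.agents.image v).max = (v w : WithBot ℝ) := by
      apply le_antisymm
      · apply Finset.max_le
        intro y hy
        rcases Finset.mem_image.mp hy with ⟨j, hj, rfl⟩
        by_cases hjw : j = w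
        · subst hjw; exact le_rfl
        · exact WithBot.coe_le_coe.mpr (le_of_lt (hmax j hj hjw))
      · exact Finset.le_max (Finset.mem_image_of_mem v hw)
    rw [hmx]; rfl
  -- the abbreviation for the telescoping values
  set f : ℕ → ℝ := fun j => bstar v (T.Vminus T.agents (T.pathVx w j)) with hf
  -- payment of an intermediate path vertex
  have hpay : ∀ j : ℕ, 1 ≤ j → j < d →
      T.payment T.agents v w (T.pathVx w j) = f j - f (j + 1) := by
    intro j hj1 hj2
    have hdj : T.depth (T.pathVx w j) = j := T.depth_pathVx w (le_of_lt hj2)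
    have hne : T.pathVx w j ≠ w := by
      intro h
      rw [h] at hdj
      omega
    unfold payment
    rw [if_neg hne, if_pos ⟨j, hj1, hj2, rfl⟩, hdj]
  -- payment of the winner
  have hpw : T.payment T.agents v w w = f d := by
    unfold payment
    rw [if_pos rfl, hf]
    simp [hd_def, T.pathVx_depth w]
  -- telescoping
  have part2 : T.payment T.agents v w w
      + ∑ j ∈ Finset.Ico 1 d, T.payment T.agents v w (T.pathVx w j) = f 1 := by
    have hsum : ∑ j ∈ Finset.Ico 1 d, T.payment T.agents v w (T.pathVx w j)
        = ∑ j ∈ Finset.Ico 1 d, (f j - f (j + 1)) := by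
      apply Finset.sum_congr rfl
      intro j hj
      rw [Finset.mem_Ico] at hj
      exact hpay j hj.1 hj.2
    have htel : ∑ j ∈ Finset.Ico 1 d, (f j - f (j + 1)) = f 1 - f d := by
      rw [Finset.sum_Ico_eq_sum_range]
      have := Finset.sum_range_sub' (fun i => f (1 + i)) (d - 1)
      simp only [add_assoc] at this ⊢
      rw [this]
      have : 1 + (d - 1) = d := by omega
      rw [this]
    rw [hsum, htel, hpw]
    ring
  -- sum over all agents
  have part3 : ∑ x ∈ T.agents, T.payment T.agents v w x = f 1 := by
    set S : Finset α := insert w ((Finset.Ico 1 d).image (T.pathVx w)) with hS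
    have hSsub : S ⊆ T.agents := by
      intro x hx
      rcases Finset.mem_insert.mp hx with h | h
      · exact h ▸ hw
      · rcases Finset.mem_image.mp h with ⟨j, hj, rfl⟩
        rw [Finset.mem_Ico] at hj
        have hdj : T.depth (T.pathVx w j) = j := T.depth_pathVx w (le_of_lt hj.2)
        have : T.pathVx w j ≠ T.s := by
          intro h
          rw [h, T.depth_s] at hdj
          omega
        simp [agents, this]
    have hsub : ∑ x ∈ T.agents, T.payment T.agents v w x
        = ∑ x ∈ S, T.payment T.agents v w x := by
      apply (Finset.sum_subset hSsub ?_).symm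
      intro x hx hxS
      have hxw : x ≠ w := by
        intro h; exact hxS (h ▸ Finset.mem_insert_self w _)
      have hxp : ¬ ∃ j : ℕ, 1 ≤ j ∧ j < d ∧ T.pathVx w j = x := by
        rintro ⟨j, hj1, hj2, rfl⟩
        exact hxS (Finset.mem_insert_of_mem
          (Finset.mem_image_of_mem _ (Finset.mem_Ico.mpr ⟨hj1, hj2⟩)))
      unfold payment
      rw [if_neg hxw, if_neg hxp]
    have hwni : w ∉ (Finset.Ico 1 d).image (T.pathVx w) := by
      intro h
      rcases Finset.mem_image.mp h with ⟨j, hj, hjw⟩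
      rw [Finset.mem_Ico] at hj
      have := T.depth_pathVx w (le_of_lt hj.2)
      rw [hjw] at this
      omega
    have hinj : ∀ i ∈ Finset.Ico 1 d, ∀ j ∈ Finset.Ico 1 d,
        T.pathVx w i = T.pathVx w j → i = j := by
      intro i hi j hj hij
      rw [Finset.mem_Ico] at hi hj
      have h1 := T.depth_pathVx w (le_of_lt hi.2)
      have h2 := T.depth_pathVx w (le_of_lt hj.2)
      rw [hij] at h1
      omega
    rw [hsub, hS, Finset.sum_insert hwni, Finset.sum_image hinj]
    exact part2
  refine ⟨part1, part2, part3, ?_⟩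
  apply bstar_nonneg
  intro i hi
  exact hpos i (Finset.mem_filter.mp hi).1
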